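/- Let κ be a power of 2 and let C be a legal configuration for capacity κ all of whose items are powers of 2. Let u = 2^x ≤ κ for a non-negative integer x, and suppose the total slack Σ_{B ∈ C} slack(B) is at least u. Then there is a sequence of legal configurations for capacity κ starting at C and ending at some configuration C′, in which each pair of consecutive configurations is adjacent via moving an item of size strictly less than u, such that C′ contains a bunch with slack at least u. -/

import Mathlib

/-- A bunch is a multiset of items (item = positive integer, encoded as `ℕ`). -/
abbrev Bunch := Multiset ℕ

/-- A configuration is a multiset of bunches. -/
abbrev Config := Multiset Bunch

/-- The volume of a bunch is the sum of its items. -/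
def vol (B : Bunch) : ℕ := B.sum

/-- A configuration is legal for capacity `κ` if every bunch has volume at most `κ`. -/
def Legal (κ : ℕ) (C : Config) : Prop := ∀ B ∈ C, vol B ≤ κ

/-- The total slack of a configuration for capacity `κ`. -/
def slackSum (κ : ℕ) (C : Config) : ℕ := (C.map fun B => κ - vol B).sum

/-- `C'` is obtained from `C` by moving the single item `u` from a donor bunch `Bd`
to a (different occurrence of a) recipient bunch `Br`, respecting the capacity `κ`. -/
def AdjacentVia (κ u : ℕ) (C C' : Config) : Prop :=
  ∃ (rest : Config) (Bd Br : Bunch),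
    u ∈ Bd ∧ vol Br + u ≤ κ ∧
    C = Bd ::ₘ Br ::ₘ rest ∧ C' = Bd.erase u ::ₘ (u ::ₘ Br) ::ₘ rest

/-- Two configurations are adjacent if one is obtained from the other by moving a single item. -/
def Adjacent (κ : ℕ) (C C' : Config) : Prop := ∃ u, AdjacentVia κ u C C'

/-- One step of a reconfiguration sequence: both configurations are legal and adjacent. -/
def Step (κ : ℕ) (C C' : Config) : Prop := Legal κ C ∧ Legal κ C' ∧ Adjacent κ C C'

/-- `CS` is reconfigurable to `CT` for capacity `κ`: there is a sequence of legal
configurations for capacity `κ` from `CS` to `CT` with consecutive ones adjacent. -/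
def Reconfigurable (κ : ℕ) (CS CT : Config) : Prop :=
  Relation.ReflTransGen (Step κ) CS CT

def MRel (κ x : ℕ) (D D' : Config) : Prop :=
  Legal κ D ∧ Legal κ D' ∧ ∃ v < 2 ^ x, AdjacentVia κ v D D'

def Pstmt (x : ℕ) : Prop :=
  ∀ (κ : ℕ) (C : Config), (∃ k, κ = 2 ^ k) → 2 ^ x ≤ κ → Legal κ C →
    (∀ a ∈ C.sum, ∃ i, a = 2 ^ i) → 2 ^ x ≤ slackSum κ C →
    ∃ C', Relation.ReflTransGen (MRel κ x) C C' ∧ ∃ B ∈ C', 2 ^ x ≤ κ - vol B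

lemma slackSum_cons (κ : ℕ) (B : Bunch) (C : Config) :
    slackSum κ (B ::ₘ C) = (κ - vol B) + slackSum κ C := by
  simp [slackSum]

lemma vol_eq_of_mem {u : ℕ} {B : Bunch} (h : u ∈ B) : vol B = u + vol (B.erase u) := by
  unfold vol
  conv_lhs => rw [← Multiset.cons_erase h]
  rw [Multiset.sum_cons]

lemma adj_sum {κ u : ℕ} {C C' : Config} (h : AdjacentVia κ u C C') :
    Multiset.sum C' = Multiset.sum C := by
  obtain ⟨r, Bd, Br, hu, hfit, hC, hC'⟩ := h
  subst hC hC'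
  simp only [Multiset.sum_cons]
  conv_rhs => rw [← Multiset.cons_erase hu]
  simp only [← Multiset.singleton_add]
  abel

lemma rel_slackSum {κ x : ℕ} {C C' : Config} (h : MRel κ x C C') :
    slackSum κ C' = slackSum κ C := by
  obtain ⟨hl, hl', v, hv, r, Bd, Br, hu, hfit, hC, hC'⟩ := h
  subst hC hC'
  have h1 : vol Bd = v + vol (Bd.erase v) := vol_eq_of_mem hu
  have h2 : vol (v ::ₘ Br) = v + vol Br := by simp [vol]
  have h3 : vol Bd ≤ κ := hl Bd (Multiset.mem_cons_self _ _)
  simp only [slackSum_cons, h2]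
  omega

lemma rel_mono {κ x y : ℕ} (hxy : x ≤ y) {C C' : Config} (h : MRel κ x C C') : MRel κ y C C' := by
  obtain ⟨hl, hl', v, hv, hadj⟩ := h
  exact ⟨hl, hl', v, lt_of_lt_of_le hv (Nat.pow_le_pow_right (by norm_num) hxy), hadj⟩

lemma rel_frame {κ x : ℕ} {A : Bunch} (hA : vol A ≤ κ) {C C' : Config}
    (h : MRel κ x C C') : MRel κ x (A ::ₘ C) (A ::ₘ C') := by
  obtain ⟨hl, hl', v, hv, r, Bd, Br, hu, hfit, hC, hC'⟩ := h
  subst hC hC'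
  refine ⟨?_, ?_, v, hv, A ::ₘ r, Bd, Br, hu, hfit, ?_, ?_⟩
  · intro B hB
    rcases Multiset.mem_cons.mp hB with h | h
    · subst h; exact hA
    · exact hl B h
  · intro B hB
    rcases Multiset.mem_cons.mp hB with h | h
    · subst h; exact hA
    · exact hl' B h
  · rw [Multiset.cons_swap A Bd, Multiset.cons_swap A Br]
  · rw [Multiset.cons_swap A (Bd.erase v), Multiset.cons_swap A (v ::ₘ Br)]

lemma rtg_legal {κ x : ℕ} {C C' : Config} (h : Relation.ReflTransGen (MRel κ x) C C')
    (hl : Legal κ C) : Legal κ C' := by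
  induction h with
  | refl => exact hl
  | tail _ h2 ih => exact h2.2.1

lemma rtg_sum {κ x : ℕ} {C C' : Config} (h : Relation.ReflTransGen (MRel κ x) C C') :
    Multiset.sum C' = Multiset.sum C := by
  induction h with
  | refl => rfl
  | tail _ h2 ih => rw [adj_sum h2.2.2.choose_spec.2, ih]

lemma rtg_slackSum {κ x : ℕ} {C C' : Config} (h : Relation.ReflTransGen (MRel κ x) C C') :
    slackSum κ C' = slackSum κ C := by
  induction h with
  | refl => rfl
  | tail _ h2 ih => rw [rel_slackSum h2, ih]

lemma rtg_frame {κ x : ℕ} {A : Bunch} (hA : vol A ≤ κ) {C C' : Config}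
    (h : Relation.ReflTransGen (MRel κ x) C C') :
    Relation.ReflTransGen (MRel κ x) (A ::ₘ C) (A ::ₘ C') :=
  Relation.ReflTransGen.lift (fun s => A ::ₘ s) (fun _ _ hr => rel_frame hA hr) _ _ h

lemma exists_pos_slack {κ : ℕ} {C : Config} (h : 0 < slackSum κ C) :
    ∃ B ∈ C, 0 < κ - vol B := by
  by_contra hc
  push_neg at hc
  have : slackSum κ C = 0 := by
    apply Multiset.sum_eq_zero
    intro a ha
    simp only [Multiset.mem_map] at ha
    obtain ⟨B, hB, rfl⟩ := ha
    have := hc B hB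
    omega
  omega

lemma key (x κ : ℕ) (hκ : ∃ k, κ = 2 ^ k) (hxκ : 2 ^ x ≤ κ)
    (HM : ∀ y, y < x → Pstmt y) (m : ℕ) :
    ∀ (T : Bunch) (rest : Config) (j : ℕ),
      (2 ^ x - (κ - vol T)) * (x + 1) + (x - j) ≤ m →
      j < x →
      Legal κ (T ::ₘ rest) →
      (∀ a ∈ (T ::ₘ rest).sum, ∃ i, a = 2 ^ i) →
      2 ^ x ≤ (κ - vol T) + slackSum κ rest →
      (∃ S ∈ rest, 2 ^ j ≤ κ - vol S) →
      ∃ C', Relation.ReflTransGen (MRel κ x) (T ::ₘ rest) C' ∧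
        ∃ B ∈ C', 2 ^ x ≤ κ - vol B := by
  induction m using Nat.strong_induction_on with
  | _ m IH =>
  intro T rest j hm hjx hleg hpow htot hprom
  obtain ⟨S, hS, hSsl⟩ := hprom
  by_cases h1 : 2 ^ x ≤ κ - vol T
  · exact ⟨T ::ₘ rest, .refl, T, Multiset.mem_cons_self _ _, h1⟩
  by_cases h2 : 2 ^ x ≤ κ - vol S
  · exact ⟨T ::ₘ rest, .refl, S, Multiset.mem_cons_of_mem hS, h2⟩
  push_neg at h1 h2
  by_cases h3 : 2 ^ (j + 1) ≤ κ - vol S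
  · -- bump j
    have hj1x : j + 1 < x := by
      by_contra hcon
      have hxj : x ≤ j + 1 := by omega
      have : 2 ^ x ≤ 2 ^ (j + 1) := Nat.pow_le_pow_right (by norm_num) hxj
      omega
    exact IH ((2 ^ x - (κ - vol T)) * (x + 1) + (x - (j + 1))) (by omega)
      T rest (j + 1) le_rfl hj1x hleg hpow htot ⟨S, hS, h3⟩
  push_neg at h3
  have hrest_eq : rest = S ::ₘ rest.erase S := (Multiset.cons_erase hS).symm
  set restE := rest.erase S with hrestE
  have hvolS : vol S ≤ κ := hleg S (Multiset.mem_cons_of_mem hS)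
  have hvolT : vol T ≤ κ := hleg T (Multiset.mem_cons_self _ _)
  have hCeq : T ::ₘ rest = T ::ₘ S ::ₘ restE := by
    conv_lhs => rw [hrest_eq]
  have hslackrest : slackSum κ rest = (κ - vol S) + slackSum κ restE := by
    conv_lhs => rw [hrest_eq]
    rw [slackSum_cons]
  by_cases hA : ∃ u ∈ T, ¬ (2 ^ (j + 1) ∣ u)
  · -- Case A : move a small item out of T into S
    obtain ⟨u, huT, hund⟩ := hA
    obtain ⟨i, rfl⟩ := hpow u (by
      rw [Multiset.sum_cons]; exact Multiset.mem_add.mpr (Or.inl huT))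
    have hij : i ≤ j := by
      by_contra hcon
      exact hund (pow_dvd_pow 2 (by omega))
    have hule : 2 ^ i ≤ 2 ^ j := Nat.pow_le_pow_right (by norm_num) hij
    have hult : 2 ^ i < 2 ^ x :=
      lt_of_le_of_lt hule (Nat.pow_lt_pow_right (by norm_num) hjx)
    have hu1 : 1 ≤ 2 ^ i := Nat.one_le_two_pow
    have hfit : vol S + 2 ^ i ≤ κ := by omega
    have huvol : vol T = 2 ^ i + vol (T.erase (2 ^ i)) := vol_eq_of_mem huT
    set T' := T.erase (2 ^ i) with hT'
    set rest' := (2 ^ i ::ₘ S) ::ₘ restE with hrest'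
    have hvolcons : vol (2 ^ i ::ₘ S) = 2 ^ i + vol S := by simp [vol]
    have hlegcur : Legal κ (T ::ₘ S ::ₘ restE) := hCeq ▸ hleg
    have hlegnew : Legal κ (T' ::ₘ rest') := by
      intro B hB
      rcases Multiset.mem_cons.mp hB with h | h
      · subst h; omega
      rcases Multiset.mem_cons.mp h with h | h
      · subst h; omega
      · exact hlegcur B (Multiset.mem_cons_of_mem (Multiset.mem_cons_of_mem h))
    have hadj : AdjacentVia κ (2 ^ i) (T ::ₘ S ::ₘ restE) (T' ::ₘ rest') :=
      ⟨restE, T, S, huT, hfit, rfl, rfl⟩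
    have hstep : MRel κ x (T ::ₘ S ::ₘ restE) (T' ::ₘ rest') :=
      ⟨hlegcur, hlegnew, 2 ^ i, hult, hadj⟩
    have hsum' : (T' ::ₘ rest').sum = (T ::ₘ rest).sum := by
      rw [adj_sum hadj, hCeq]
    have hslack' : slackSum κ (T' ::ₘ rest') = slackSum κ (T ::ₘ rest) := by
      rw [rel_slackSum hstep, hCeq]
    by_cases hdone : 2 ^ x ≤ κ - vol T'
    · exact ⟨T' ::ₘ rest', by rw [hCeq]; exact Relation.ReflTransGen.single hstep,
        T', Multiset.mem_cons_self _ _, hdone⟩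
    push_neg at hdone
    have e1 : slackSum κ (T' ::ₘ rest') = (κ - vol T') + slackSum κ rest' :=
      slackSum_cons κ T' rest'
    have e2 : slackSum κ (T ::ₘ rest) = (κ - vol T) + slackSum κ rest :=
      slackSum_cons κ T rest
    have htot' : 2 ^ x ≤ (κ - vol T') + slackSum κ rest' := by omega
    have hposrest' : 0 < slackSum κ rest' := by omega
    obtain ⟨S', hS', hS'p⟩ := exists_pos_slack hposrest'
    have hm' : (2 ^ x - (κ - vol T')) * (x + 1) + (x - 0) < m := by
      have hD : 2 ^ x - (κ - vol T') < 2 ^ x - (κ - vol T) := by omega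
      have hmul := Nat.mul_le_mul_right (x + 1)
        (show (2 ^ x - (κ - vol T')) + 1 ≤ 2 ^ x - (κ - vol T) by omega)
      have hexp : ((2 ^ x - (κ - vol T')) + 1) * (x + 1)
          = (2 ^ x - (κ - vol T')) * (x + 1) + (x + 1) := by ring
      omega
    obtain ⟨C', hR, hfin⟩ := IH _ hm' T' rest' 0 le_rfl (by omega) hlegnew
      (fun a ha => hpow a (by rw [hsum'] at ha; exact ha))
      htot' ⟨S', hS', by simp only [pow_zero]; exact hS'p⟩
    refine ⟨C', ?_, hfin⟩
    rw [hCeq]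
    exact Relation.ReflTransGen.head hstep hR
  · -- Case B : all items of T divisible by 2^(j+1)
    push_neg at hA
    have hdvdvol : 2 ^ (j + 1) ∣ vol T := Multiset.dvd_sum hA
    obtain ⟨k, hκk⟩ := hκ
    have hxk : x ≤ k := by
      have h2k : (2 : ℕ) ^ x ≤ 2 ^ k := by rw [← hκk]; exact hxκ
      exact (Nat.pow_le_pow_iff_right (by norm_num)).mp h2k
    have hdvdκ : 2 ^ (j + 1) ∣ κ := by
      rw [hκk]; exact pow_dvd_pow 2 (by omega)
    have hdvdsl : 2 ^ (j + 1) ∣ (κ - vol T) := Nat.dvd_sub hdvdκ hdvdvol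
    have hdvd2x : 2 ^ (j + 1) ∣ 2 ^ x := pow_dvd_pow 2 (by omega)
    have hdvddiff : 2 ^ (j + 1) ∣ (2 ^ x - (κ - vol T)) := Nat.dvd_sub hdvd2x hdvdsl
    have hgap : 2 ^ (j + 1) ≤ 2 ^ x - (κ - vol T) := Nat.le_of_dvd (by omega) hdvddiff
    have hrestbig : 2 ^ (j + 1) ≤ slackSum κ rest := by omega
    by_cases hj1 : j + 1 < x
    · obtain ⟨rest2, hR2, S2, hS2, hS2s⟩ := HM (j + 1) hj1 κ rest ⟨k, hκk⟩
        (le_trans (Nat.pow_le_pow_right (by norm_num) (le_of_lt hj1)) hxκ)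
        (fun B hB => hleg B (Multiset.mem_cons_of_mem hB))
        (fun a ha => hpow a (by rw [Multiset.sum_cons]; exact Multiset.mem_add.mpr (Or.inr ha)))
        hrestbig
      have hR2x : Relation.ReflTransGen (MRel κ x) rest rest2 :=
        Relation.ReflTransGen.mono (fun a b h => rel_mono (le_of_lt hj1) h) _ _ hR2
      have hframe := rtg_frame hvolT hR2x
      have hleg2 : Legal κ rest2 := rtg_legal hR2x (fun B hB => hleg B (Multiset.mem_cons_of_mem hB))
      have hsum2 : rest2.sum = rest.sum := rtg_sum hR2x
      have hsl2 : slackSum κ rest2 = slackSum κ rest := rtg_slackSum hR2x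
      obtain ⟨C', hR3, hfin⟩ := IH ((2 ^ x - (κ - vol T)) * (x + 1) + (x - (j + 1)))
        (by omega) T rest2 (j + 1) le_rfl hj1
        (by
          intro B hB
          rcases Multiset.mem_cons.mp hB with h | h
          · subst h; exact hvolT
          · exact hleg2 B h)
        (by
          intro a ha
          apply hpow
          rw [Multiset.sum_cons] at ha ⊢
          rw [hsum2] at ha
          exact ha)
        (by omega) ⟨S2, hS2, hS2s⟩
      exact ⟨C', hframe.trans hR3, hfin⟩
    · -- j + 1 = x : slack T = 0, re-designate S as target
      have hjx1 : j + 1 = x := by omega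
      have hT0 : κ - vol T = 0 := by
        rw [hjx1] at hgap
        omega
      have hCeq2 : T ::ₘ rest = S ::ₘ T ::ₘ restE := by
        conv_lhs => rw [hrest_eq]
        rw [Multiset.cons_swap]
      have hlegnew : Legal κ (S ::ₘ T ::ₘ restE) := hCeq2 ▸ hleg
      have hslE : slackSum κ (T ::ₘ restE) = (κ - vol T) + slackSum κ restE :=
        slackSum_cons κ T restE
      have hSpos : 1 ≤ κ - vol S := le_trans Nat.one_le_two_pow hSsl
      have htotnew : 2 ^ x ≤ (κ - vol S) + slackSum κ (T ::ₘ restE) := by omega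
      have hposE : 0 < slackSum κ (T ::ₘ restE) := by omega
      obtain ⟨S', hS', hS'p⟩ := exists_pos_slack hposE
      have hm' : (2 ^ x - (κ - vol S)) * (x + 1) + (x - 0) < m := by
        have hmul := Nat.mul_le_mul_right (x + 1)
          (show (2 ^ x - (κ - vol S)) + 1 ≤ 2 ^ x - (κ - vol T) by omega)
        have hexp : ((2 ^ x - (κ - vol S)) + 1) * (x + 1)
            = (2 ^ x - (κ - vol S)) * (x + 1) + (x + 1) := by ring
        omega
      obtain ⟨C', hR3, hfin⟩ := IH _ hm' S (T ::ₘ restE) 0 le_rfl (by omega) hlegnew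
        (fun a ha => hpow a (by rw [hCeq2]; exact ha))
        htotnew ⟨S', hS', by simp only [pow_zero]; exact hS'p⟩
      exact ⟨C', by rw [hCeq2]; exact hR3, hfin⟩

lemma mainLemma : ∀ x, Pstmt x := by
  intro x
  induction x using Nat.strong_induction_on with
  | _ x HM =>
  intro κ C hκ hxκ hleg hpow hslack
  by_cases hex : ∃ B ∈ C, 2 ^ x ≤ κ - vol B
  · exact ⟨C, .refl, hex⟩
  push_neg at hex
  have hpos : 0 < slackSum κ C := lt_of_lt_of_le (Nat.two_pow_pos x) hslack
  obtain ⟨S, hS, hSpos⟩ := exists_pos_slack hpos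
  have hx0 : 0 < x := by
    rcases Nat.eq_zero_or_pos x with h | h
    · exfalso
      have := hex S hS
      rw [h] at this
      omega
    · exact h
  have hCeq : C = S ::ₘ C.erase S := (Multiset.cons_erase hS).symm
  have hslackeq : slackSum κ C = (κ - vol S) + slackSum κ (C.erase S) := by
    conv_lhs => rw [hCeq]
    rw [slackSum_cons]
  have hSlt := hex S hS
  have hrestpos : 0 < slackSum κ (C.erase S) := by omega
  obtain ⟨S', hS', hS'p⟩ := exists_pos_slack hrestpos
  obtain ⟨C', hR, hfin⟩ := key x κ hκ hxκ (fun y hy => HM y hy)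
    ((2 ^ x - (κ - vol S)) * (x + 1) + (x - 0)) S (C.erase S) 0 le_rfl hx0
    (by rw [← hCeq]; exact hleg)
    (by rw [← hCeq]; exact hpow)
    (by omega)
    ⟨S', hS', by simp only [pow_zero]; exact hS'p⟩
  exact ⟨C', by rw [hCeq]; exact hR, hfin⟩

theorem stmt8 (κ x : ℕ) (hκ : ∃ k, κ = 2 ^ k) (hu : 2 ^ x ≤ κ)
    (C : Config) (hC : Legal κ C)
    (hpow : ∀ a ∈ C.sum, ∃ j : ℕ, a = 2 ^ j)
    (hslack : 2 ^ x ≤ slackSum κ C) :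
    ∃ C' : Config,
      Relation.ReflTransGen
        (fun D D' => Legal κ D ∧ Legal κ D' ∧ ∃ v < 2 ^ x, AdjacentVia κ v D D') C C' ∧
      ∃ B ∈ C', 2 ^ x ≤ κ - vol B := by
  exact mainLemma x κ C hκ hu hC hpow hslack
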